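/- Let n ≥ 1 and let a be a signed permutation on [n]. Let p be the (2n+1)-cycle (0, −1, −2, …, −n, n, n−1, …, 1) on [n]± and let s̃(a) be the (2n+1)-cycle (0, a₁, …, aₙ, −aₙ, …, −a₁) on [n]±. Then the reversal distance of a satisfies d_r(a) ≥ (2n + 1 − C(p ∘ s̃(a))) / 2. -/

import Mathlib

/-- Number of cycles of a permutation of a finite set, fixed points counting as 1-cycles. -/
def cycleCount {α : Type*} [Fintype α] [DecidableEq α] (π : Equiv.Perm α) : ℕ :=
  π.cycleType.card + (Finset.univ.filter fun x => π x = x).card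

/-- The set `[n]± = {-n, …, -1, 0, 1, …, n}` of integers. -/
abbrev Ipm (n : ℕ) : Type := {j : ℤ // j ∈ Finset.Icc (-(n : ℤ)) (n : ℤ)}

/-- The sequence `s = 0, a₁, …, aₙ, -aₙ, …, -a₁` (indices `0, …, 2n`). -/
def seq (n : ℕ) (a : ℕ → ℤ) (k : ℕ) : ℤ :=
  if k = 0 then 0 else if k ≤ n then a k else -a (2 * n + 1 - k)

/-- `a₁, …, aₙ` is a signed permutation on `[n]`:
`|a₁|, …, |aₙ|` is a permutation of `1, …, n`. -/
def IsSignedPerm (n : ℕ) (a : ℕ → ℤ) : Prop :=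
  (Finset.Icc 1 n).image (fun k => |a k|) = Finset.Icc (1 : ℤ) (n : ℤ)

/-- The reversal `ρ_{i,j}` acting on the sequence `a`: it sends
`a` to `a₁, …, a_{i-1}, -a_j, …, -a_i, a_{j+1}, …, aₙ`. -/
def reversal (i j : ℕ) (a : ℕ → ℤ) : ℕ → ℤ :=
  fun k => if i ≤ k ∧ k ≤ j then -a (i + j - k) else a k

/-- `a` can be transformed into the identity `1, 2, …, n` by `d` reversals. -/
def SortsIn (n : ℕ) (a : ℕ → ℤ) (d : ℕ) : Prop :=
  ∃ l : List (ℕ × ℕ), l.length = d ∧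
    (∀ q ∈ l, 1 ≤ q.1 ∧ q.1 ≤ q.2 ∧ q.2 ≤ n) ∧
    ∀ k, 1 ≤ k → k ≤ n → (l.foldl (fun f q => reversal q.1 q.2 f) a) k = (k : ℤ)

open Equiv Equiv.Perm

section CC
variable {α : Type*} [Fintype α] [DecidableEq α]

lemma cycleCount_one : cycleCount (1 : Perm α) = Fintype.card α := by
  simp [cycleCount, Equiv.Perm.cycleType_one, Finset.filter_true_of_mem, Finset.card_univ]

lemma sameCycle_fixed {π : Perm α} {x y : α} (h : π.SameCycle x y) (hx : π x = x) : x = y := by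
  obtain ⟨i, rfl⟩ := h
  exact (Equiv.Perm.zpow_apply_eq_self_of_apply_eq_self hx i).symm

lemma cycleCount_eq_nat_card (π : Perm α) :
    cycleCount π = Nat.card (Quotient (Equiv.Perm.SameCycle.setoid π)) := by
  classical
  have hmem : ∀ a : α, ¬ π a = a → π.cycleOf a ∈ π.cycleFactorsFinset := fun a h =>
    Equiv.Perm.cycleOf_mem_cycleFactorsFinset_iff.mpr (Equiv.Perm.mem_support.mpr h)
  let f : α → ({c : Perm α // c ∈ π.cycleFactorsFinset} ⊕ {x : α // π x = x}) := fun a =>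
    if h : π a = a then Sum.inr ⟨a, h⟩ else Sum.inl ⟨π.cycleOf a, hmem a h⟩
  have hresp : ∀ a b : α, π.SameCycle a b → f a = f b := by
    intro a b hab
    by_cases ha : π a = a
    · obtain rfl := sameCycle_fixed hab ha
      rfl
    · have hb : ¬ π b = b := fun hb => ha ((sameCycle_fixed hab.symm hb) ▸ hb)
      have : π.cycleOf a = π.cycleOf b := hab.cycleOf_eq
      simp only [f, dif_neg ha, dif_neg hb, this]
  let g : Quotient (Equiv.Perm.SameCycle.setoid π) →
      ({c : Perm α // c ∈ π.cycleFactorsFinset} ⊕ {x : α // π x = x}) :=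
    Quotient.lift f (fun a b h => hresp a b h)
  have hginj : Function.Injective g := by
    intro q q'
    induction q using Quotient.inductionOn with | h a =>
    induction q' using Quotient.inductionOn with | h b =>
    intro h
    apply Quotient.sound
    show π.SameCycle a b
    by_cases ha : π a = a <;> by_cases hb : π b = b
    · simp only [g, Quotient.lift_mk, f, dif_pos ha, dif_pos hb, Sum.inr.injEq,
        Subtype.mk.injEq] at h
      exact h ▸ Equiv.Perm.SameCycle.refl _ _
    · simp only [g, Quotient.lift_mk, f, dif_pos ha, dif_neg hb] at h
      simp at h
    · simp only [g, Quotient.lift_mk, f, dif_neg ha, dif_pos hb] at h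
      simp at h
    · simp only [g, Quotient.lift_mk, f, dif_neg ha, dif_neg hb, Sum.inl.injEq,
        Subtype.mk.injEq] at h
      by_contra hs
      have := Equiv.Perm.cycleOf_apply_of_not_sameCycle hs
      rw [h, Equiv.Perm.cycleOf_apply_self] at this
      exact hb this
  have hgsurj : Function.Surjective g := by
    rintro (⟨c, hc⟩ | ⟨x, hx⟩)
    · obtain ⟨hcyc, hall⟩ := Equiv.Perm.mem_cycleFactorsFinset_iff.mp hc
      obtain ⟨x, hx, -⟩ := hcyc
      have hxs : x ∈ c.support := Equiv.Perm.mem_support.mpr hx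
      have hπx : ¬ π x = x := by rw [← hall x hxs]; exact hx
      have hco : π.cycleOf x = c := (Equiv.Perm.cycle_is_cycleOf hxs hc).symm
      refine ⟨⟦x⟧, ?_⟩
      simp only [g, Quotient.lift_mk, f, dif_neg hπx, hco]
    · exact ⟨⟦x⟧, by simp only [g, Quotient.lift_mk, f, dif_pos hx]⟩
  have hcard := Nat.card_eq_of_bijective g ⟨hginj, hgsurj⟩
  rw [hcard, Nat.card_sum, cycleCount]
  congr 1
  · rw [Nat.card_eq_fintype_card, Fintype.card_coe, Equiv.Perm.cycleType_def,
      Multiset.card_map]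
    rfl
  · rw [Nat.card_eq_fintype_card, Fintype.card_subtype]

lemma natCard_quot_le_aux (ψ : Perm α) (x y : α) :
    Nat.card (Quotient (Equiv.Perm.SameCycle.setoid ψ))
      ≤ Nat.card (Quotient (Equiv.Perm.SameCycle.setoid (ψ * Equiv.swap x y))) + 1 := by
  classical
  set ψ' := ψ * Equiv.swap x y with hψ'
  let t : Setoid α :=
    { r := fun a b => ψ.SameCycle a b ∨ (ψ.SameCycle a x ∧ ψ.SameCycle y b) ∨
        (ψ.SameCycle a y ∧ ψ.SameCycle x b)
      iseqv := by
        constructor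
        · exact fun a => Or.inl (Equiv.Perm.SameCycle.refl _ _)
        · rintro a b (h | ⟨h1, h2⟩ | ⟨h1, h2⟩)
          · exact Or.inl h.symm
          · exact Or.inr (Or.inr ⟨h2.symm, h1.symm⟩)
          · exact Or.inr (Or.inl ⟨h2.symm, h1.symm⟩)
        · rintro a b c (h | ⟨h1, h2⟩ | ⟨h1, h2⟩) (h' | ⟨h1', h2'⟩ | ⟨h1', h2'⟩)
          · exact Or.inl (h.trans h')
          · exact Or.inr (Or.inl ⟨h.trans h1', h2'⟩)
          · exact Or.inr (Or.inr ⟨h.trans h1', h2'⟩)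
          · exact Or.inr (Or.inl ⟨h1, h2.trans h'⟩)
          · exact Or.inl ((h1.trans (h2.trans h1').symm).trans h2')
          · exact Or.inl (h1.trans h2')
          · exact Or.inr (Or.inr ⟨h1, h2.trans h'⟩)
          · exact Or.inl (h1.trans h2')
          · exact Or.inl ((h1.trans (h2.trans h1').symm).trans h2') }
  -- single step
  have hstep : ∀ a : α, t.r a (ψ' a) := by
    intro a
    by_cases hax : a = x
    · subst hax
      have : ψ' a = ψ y := by
        simp [ψ', Equiv.Perm.mul_apply, Equiv.swap_apply_left]
      rw [this]
      exact Or.inr (Or.inl ⟨Equiv.Perm.SameCycle.refl _ _, ⟨1, rfl⟩⟩)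
    · by_cases hay : a = y
      · subst hay
        have : ψ' a = ψ x := by
          simp [ψ', Equiv.Perm.mul_apply, Equiv.swap_apply_right]
        rw [this]
        exact Or.inr (Or.inr ⟨Equiv.Perm.SameCycle.refl _ _, ⟨1, rfl⟩⟩)
      · have : ψ' a = ψ a := by
          simp [ψ', Equiv.Perm.mul_apply, Equiv.swap_apply_of_ne_of_ne hax hay]
        rw [this]
        exact Or.inl ⟨1, rfl⟩
  have hstep' : ∀ a : α, t.r a (ψ'⁻¹ a) := by
    intro a
    have := hstep (ψ'⁻¹ a)
    rw [show ψ' (ψ'⁻¹ a) = a from ψ'.apply_symm_apply a] at this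
    exact t.iseqv.symm this
  have hsub : ∀ a b : α, ψ'.SameCycle a b → t.r a b := by
    rintro a b ⟨i, rfl⟩
    induction i using Int.induction_on with
    | zero => exact t.iseqv.refl a
    | succ i ih =>
      have h1 : (ψ' ^ ((i : ℤ) + 1)) a = ψ' ((ψ' ^ (i : ℤ)) a) := by
        rw [add_comm, zpow_one_add, Equiv.Perm.mul_apply]
      rw [h1]
      exact t.iseqv.trans ih (hstep _)
    | pred i ih =>
      have h1 : (ψ' ^ (-(i : ℤ) - 1)) a = ψ'⁻¹ ((ψ' ^ (-(i : ℤ))) a) := by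
        rw [show -(i : ℤ) - 1 = -1 + -(i : ℤ) by ring, zpow_add, zpow_neg_one,
          Equiv.Perm.mul_apply]
      rw [h1]
      exact t.iseqv.trans ih (hstep' _)
  haveI : Finite (Quotient t) := Quotient.finite _
  -- surjection : Quot (setoid ψ') → Quot t
  have hA : Nat.card (Quotient t)
      ≤ Nat.card (Quotient (Equiv.Perm.SameCycle.setoid ψ')) := by
    apply Nat.card_le_card_of_surjective
      (f := fun q : Quotient (Equiv.Perm.SameCycle.setoid ψ') =>
        Quotient.liftOn q (fun a => (Quotient.mk t a))
          (fun a b h => Quotient.sound (hsub a b h)))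
    intro q
    induction q using Quotient.inductionOn with | h a =>
    exact ⟨⟦a⟧, rfl⟩
  -- injection : Quot (setoid ψ) → Option (Quot t)
  have hB : Nat.card (Quotient (Equiv.Perm.SameCycle.setoid ψ))
      ≤ Nat.card (Quotient t) + 1 := by
    have hto : ∀ a b : α, (Equiv.Perm.SameCycle.setoid ψ).r a b → t.r a b :=
      fun a b h => Or.inl h
    let F : Quotient (Equiv.Perm.SameCycle.setoid ψ) → Option (Quotient t) := fun q =>
      if q = Quotient.mk _ y then none
      else some (Quotient.liftOn q (fun a => Quotient.mk t a)
        (fun a b h => Quotient.sound (hto a b h)))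
    have hFinj : Function.Injective F := by
      intro q q'
      induction q using Quotient.inductionOn with | h a =>
      induction q' using Quotient.inductionOn with | h b =>
      intro h
      by_cases hay : (⟦a⟧ : Quotient (Equiv.Perm.SameCycle.setoid ψ)) = ⟦y⟧ <;>
        by_cases hby : (⟦b⟧ : Quotient (Equiv.Perm.SameCycle.setoid ψ)) = ⟦y⟧
      · exact hay.trans hby.symm
      · simp only [F, if_pos hay, if_neg hby] at h
        simp at h
      · simp only [F, if_neg hay, if_pos hby] at h
        simp at h
      · simp only [F, if_neg hay, if_neg hby] at h
        have hab : t.r a b := Quotient.exact (Option.some_injective _ h)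
        rcases hab with hr | ⟨ha, hb⟩ | ⟨ha, hb⟩
        · exact Quotient.sound hr
        · exact absurd (Quotient.sound hb.symm) hby
        · exact absurd (Quotient.sound ha) hay
    calc Nat.card (Quotient (Equiv.Perm.SameCycle.setoid ψ))
        ≤ Nat.card (Option (Quotient t)) := Nat.card_le_card_of_injective F hFinj
      _ = Nat.card (Quotient t) + 1 := by
          letI := Fintype.ofFinite (Quotient t)
          simp [Nat.card_eq_fintype_card]
  omega

lemma cycleCount_mul_swap_le (ψ : Perm α) (x y : α) :
    cycleCount (ψ * Equiv.swap x y) ≤ cycleCount ψ + 1 := by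
  have h := natCard_quot_le_aux (ψ * Equiv.swap x y) x y
  rw [mul_assoc, Equiv.swap_mul_self, mul_one] at h
  rw [cycleCount_eq_nat_card, cycleCount_eq_nat_card]
  exact h
end CC


def mIdx (n i j k : ℕ) : ℕ :=
  if i ≤ k ∧ k ≤ j then 2*n+1+k-(i+j)
  else if 2*n+1-j ≤ k ∧ k ≤ 2*n+1-i then i+j+k-(2*n+1) else k

def swIdx (p q t : ℕ) : ℕ := if t = p then q else if t = q then p else t

def succN (n a : ℕ) : ℕ := if a = 2*n then 0 else a + 1

lemma mIdx_le (n i j k : ℕ) (h1 : 1 ≤ i) (hij : i ≤ j) (hjn : j ≤ n) (hk : k ≤ 2*n) :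
    mIdx n i j k ≤ 2*n := by
  unfold mIdx; split_ifs <;> omega

lemma mIdx_invol (n i j k : ℕ) (h1 : 1 ≤ i) (hij : i ≤ j) (hjn : j ≤ n) (hk : k ≤ 2*n) :
    mIdx n i j (mIdx n i j k) = k := by
  unfold mIdx; split_ifs <;> omega

lemma succN_le (n a : ℕ) (h : a ≤ 2*n) : succN n a ≤ 2*n := by
  unfold succN; split_ifs <;> omega

lemma mod_eq_succN (n a : ℕ) (h : a ≤ 2*n) : (a + 1) % (2*n+1) = succN n a := by
  unfold succN; split_ifs with h1
  · rw [h1]; exact Nat.mod_self (2*n+1)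
  · exact Nat.mod_eq_of_lt (by omega)

lemma s8_index (n i j t : ℕ) (h1 : 1 ≤ i) (hij : i ≤ j) (hjn : j ≤ n) (ht : t ≤ 2*n) :
    succN n (swIdx (i-1) (2*n-j) (swIdx j (2*n+1-i) t)) = mIdx n i j (succN n (mIdx n i j t)) := by
  have hsplit : ((t+1 < i) ∨ (j < t ∧ t+1 < 2*n+1-j) ∨ (2*n+1-i < t ∧ t < 2*n))
    ∨ (t = i-1) ∨ (i ≤ t ∧ t < j) ∨ (t = j ∧ i = 1) ∨ (t = j ∧ 2 ≤ i)
    ∨ (t = 2*n-j ∧ j < n) ∨ (2*n+1-j ≤ t ∧ t ≤ 2*n-i) ∨ (t = 2*n+1-i ∧ j = n)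
    ∨ (t = 2*n+1-i ∧ j < n) ∨ (t = 2*n ∧ 2 ≤ i) := by omega
  rcases hsplit with h|h|h|h|h|h|h|h|h|h
  · have e2 : swIdx j (2*n+1-i) t = t := by unfold swIdx; split_ifs <;> omega
    have e1 : swIdx (i-1) (2*n-j) (t) = t := by unfold swIdx; split_ifs <;> omega
    have e0 : succN n (t) = t+1 := by unfold succN; split_ifs <;> omega
    have g1 : mIdx n i j t = t := by unfold mIdx; split_ifs <;> omega
    have g2 : succN n (t) = t+1 := by unfold succN; split_ifs <;> omega
    have g3 : mIdx n i j (t+1) = t+1 := by unfold mIdx; split_ifs <;> omega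
    rw [e2, e1, e0, g1, g2, g3]
  · have e2 : swIdx j (2*n+1-i) t = t := by unfold swIdx; split_ifs <;> omega
    have e1 : swIdx (i-1) (2*n-j) (t) = 2*n-j := by unfold swIdx; split_ifs <;> omega
    have e0 : succN n (2*n-j) = 2*n+1-j := by unfold succN; split_ifs <;> omega
    have g1 : mIdx n i j t = i-1 := by unfold mIdx; split_ifs <;> omega
    have g2 : succN n (i-1) = i := by unfold succN; split_ifs <;> omega
    have g3 : mIdx n i j (i) = 2*n+1-j := by unfold mIdx; split_ifs <;> omega
    rw [e2, e1, e0, g1, g2, g3]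
  · have e2 : swIdx j (2*n+1-i) t = t := by unfold swIdx; split_ifs <;> omega
    have e1 : swIdx (i-1) (2*n-j) (t) = t := by unfold swIdx; split_ifs <;> omega
    have e0 : succN n (t) = t+1 := by unfold succN; split_ifs <;> omega
    have g1 : mIdx n i j t = 2*n+1+t-(i+j) := by unfold mIdx; split_ifs <;> omega
    have g2 : succN n (2*n+1+t-(i+j)) = 2*n+2+t-(i+j) := by unfold succN; split_ifs <;> omega
    have g3 : mIdx n i j (2*n+2+t-(i+j)) = t+1 := by unfold mIdx; split_ifs <;> omega
    rw [e2, e1, e0, g1, g2, g3]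
  · have e2 : swIdx j (2*n+1-i) t = 2*n := by unfold swIdx; split_ifs <;> omega
    have e1 : swIdx (i-1) (2*n-j) (2*n) = 2*n := by unfold swIdx; split_ifs <;> omega
    have e0 : succN n (2*n) = 0 := by unfold succN; split_ifs <;> omega
    have g1 : mIdx n i j t = 2*n := by unfold mIdx; split_ifs <;> omega
    have g2 : succN n (2*n) = 0 := by unfold succN; split_ifs <;> omega
    have g3 : mIdx n i j (0) = 0 := by unfold mIdx; split_ifs <;> omega
    rw [e2, e1, e0, g1, g2, g3]
  · have e2 : swIdx j (2*n+1-i) t = 2*n+1-i := by unfold swIdx; split_ifs <;> omega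
    have e1 : swIdx (i-1) (2*n-j) (2*n+1-i) = 2*n+1-i := by unfold swIdx; split_ifs <;> omega
    have e0 : succN n (2*n+1-i) = 2*n+2-i := by unfold succN; split_ifs <;> omega
    have g1 : mIdx n i j t = 2*n+1-i := by unfold mIdx; split_ifs <;> omega
    have g2 : succN n (2*n+1-i) = 2*n+2-i := by unfold succN; split_ifs <;> omega
    have g3 : mIdx n i j (2*n+2-i) = 2*n+2-i := by unfold mIdx; split_ifs <;> omega
    rw [e2, e1, e0, g1, g2, g3]
  · have e2 : swIdx j (2*n+1-i) t = t := by unfold swIdx; split_ifs <;> omega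
    have e1 : swIdx (i-1) (2*n-j) (t) = i-1 := by unfold swIdx; split_ifs <;> omega
    have e0 : succN n (i-1) = i := by unfold succN; split_ifs <;> omega
    have g1 : mIdx n i j t = 2*n-j := by unfold mIdx; split_ifs <;> omega
    have g2 : succN n (2*n-j) = 2*n+1-j := by unfold succN; split_ifs <;> omega
    have g3 : mIdx n i j (2*n+1-j) = i := by unfold mIdx; split_ifs <;> omega
    rw [e2, e1, e0, g1, g2, g3]
  · have e2 : swIdx j (2*n+1-i) t = t := by unfold swIdx; split_ifs <;> omega
    have e1 : swIdx (i-1) (2*n-j) (t) = t := by unfold swIdx; split_ifs <;> omega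
    have e0 : succN n (t) = t+1 := by unfold succN; split_ifs <;> omega
    have g1 : mIdx n i j t = i+j+t-(2*n+1) := by unfold mIdx; split_ifs <;> omega
    have g2 : succN n (i+j+t-(2*n+1)) = i+j+t-2*n := by unfold succN; split_ifs <;> omega
    have g3 : mIdx n i j (i+j+t-2*n) = t+1 := by unfold mIdx; split_ifs <;> omega
    rw [e2, e1, e0, g1, g2, g3]
  · have e2 : swIdx j (2*n+1-i) t = n := by unfold swIdx; split_ifs <;> omega
    have e1 : swIdx (i-1) (2*n-j) (n) = i-1 := by unfold swIdx; split_ifs <;> omega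
    have e0 : succN n (i-1) = i := by unfold succN; split_ifs <;> omega
    have g1 : mIdx n i j t = n := by unfold mIdx; split_ifs <;> omega
    have g2 : succN n (n) = n+1 := by unfold succN; split_ifs <;> omega
    have g3 : mIdx n i j (n+1) = i := by unfold mIdx; split_ifs <;> omega
    rw [e2, e1, e0, g1, g2, g3]
  · have e2 : swIdx j (2*n+1-i) t = j := by unfold swIdx; split_ifs <;> omega
    have e1 : swIdx (i-1) (2*n-j) (j) = j := by unfold swIdx; split_ifs <;> omega
    have e0 : succN n (j) = j+1 := by unfold succN; split_ifs <;> omega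
    have g1 : mIdx n i j t = j := by unfold mIdx; split_ifs <;> omega
    have g2 : succN n (j) = j+1 := by unfold succN; split_ifs <;> omega
    have g3 : mIdx n i j (j+1) = j+1 := by unfold mIdx; split_ifs <;> omega
    rw [e2, e1, e0, g1, g2, g3]
  · have e2 : swIdx j (2*n+1-i) t = 2*n := by unfold swIdx; split_ifs <;> omega
    have e1 : swIdx (i-1) (2*n-j) (2*n) = 2*n := by unfold swIdx; split_ifs <;> omega
    have e0 : succN n (2*n) = 0 := by unfold succN; split_ifs <;> omega
    have g1 : mIdx n i j t = 2*n := by unfold mIdx; split_ifs <;> omega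
    have g2 : succN n (2*n) = 0 := by unfold succN; split_ifs <;> omega
    have g3 : mIdx n i j (0) = 0 := by unfold mIdx; split_ifs <;> omega
    rw [e2, e1, e0, g1, g2, g3]

section SeqLemmas
variable {n : ℕ} {b : ℕ → ℤ}

lemma habs (hb : IsSignedPerm n b) : ∀ m, 1 ≤ m → m ≤ n → 1 ≤ |b m| ∧ |b m| ≤ n := by
  intro m h1 h2
  have : |b m| ∈ Finset.Icc (1 : ℤ) (n : ℤ) := by
    rw [← hb]
    exact Finset.mem_image_of_mem _ (Finset.mem_Icc.mpr ⟨h1, h2⟩)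
  exact Finset.mem_Icc.mp this

lemma hinjOn (hb : IsSignedPerm n b) : Set.InjOn (fun k => |b k|) ↑(Finset.Icc 1 n) := by
  apply Finset.injOn_of_card_image_eq
  rw [hb, Int.card_Icc, Nat.card_Icc]
  omega


lemma seq_eval0 : seq n b 0 = 0 := by simp [seq]

lemma seq_eval1 {k : ℕ} (h1 : 1 ≤ k) (h2 : k ≤ n) : seq n b k = b k := by
  unfold seq; rw [if_neg (by omega), if_pos h2]

lemma seq_eval2 {k : ℕ} (h : n < k) : seq n b k = -b (2*n+1-k) := by
  unfold seq; rw [if_neg (by omega), if_neg (by omega)]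

lemma rev_in {i j k : ℕ} (h : i ≤ k ∧ k ≤ j) : reversal i j b k = -b (i+j-k) := by
  unfold reversal; rw [if_pos h]

lemma rev_out {i j k : ℕ} (h : ¬(i ≤ k ∧ k ≤ j)) : reversal i j b k = b k := by
  unfold reversal; rw [if_neg h]

lemma seq_mem (hb : IsSignedPerm n b) {k : ℕ} (hk : k ≤ 2*n) :
    seq n b k ∈ Finset.Icc (-(n : ℤ)) (n : ℤ) := by
  rw [Finset.mem_Icc]
  unfold seq
  split_ifs with h0 h1
  · constructor <;> [linarith [Int.natCast_nonneg n]; exact Int.natCast_nonneg n]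
  · have := (habs hb k (by omega) h1).2
    constructor <;> [linarith [abs_le.mp this |>.1]; exact (abs_le.mp this).2]
  · have := (habs hb (2*n+1-k) (by omega) (by omega)).2
    have h2 := abs_le.mp this
    constructor <;> [linarith [h2.2]; linarith [h2.1]]

lemma seq_inj (hb : IsSignedPerm n b) {k1 k2 : ℕ} (h1 : k1 ≤ 2*n) (h2 : k2 ≤ 2*n)
    (heq : seq n b k1 = seq n b k2) : k1 = k2 := by
  have hIO := hinjOn hb
  have habs' := habs hb
  have key : ∀ m1 m2, 1 ≤ m1 → m1 ≤ n → 1 ≤ m2 → m2 ≤ n → |b m1| = |b m2| → m1 = m2 := by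
    intro m1 m2 a c d e hE
    exact hIO (Finset.mem_coe.mpr (Finset.mem_Icc.mpr ⟨a, c⟩))
      (Finset.mem_coe.mpr (Finset.mem_Icc.mpr ⟨d, e⟩)) hE
  have hne : ∀ m, 1 ≤ m → m ≤ n → b m ≠ 0 := by
    intro m a c h0
    have := (habs' m a c).1
    rw [h0] at this; simp at this
  have hsplit1 : k1 = 0 ∨ (1 ≤ k1 ∧ k1 ≤ n) ∨ (n < k1 ∧ k1 ≤ 2*n) := by omega
  have hsplit2 : k2 = 0 ∨ (1 ≤ k2 ∧ k2 ≤ n) ∨ (n < k2 ∧ k2 ≤ 2*n) := by omega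
  rcases hsplit1 with hA|hA|hA <;> rcases hsplit2 with hB|hB|hB
  · omega
  · exfalso
    rw [hA, seq_eval0, seq_eval1 hB.1 hB.2] at heq
    exact hne k2 hB.1 hB.2 heq.symm
  · exfalso
    rw [hA, seq_eval0, seq_eval2 hB.1] at heq
    have := hne (2*n+1-k2) (by omega) (by omega)
    omega
  · exfalso
    rw [hB, seq_eval0, seq_eval1 hA.1 hA.2] at heq
    exact hne k1 hA.1 hA.2 heq
  · rw [seq_eval1 hA.1 hA.2, seq_eval1 hB.1 hB.2] at heq
    exact key _ _ hA.1 hA.2 hB.1 hB.2 (by rw [heq])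
  · exfalso
    rw [seq_eval1 hA.1 hA.2, seq_eval2 hB.1] at heq
    have hk : k1 = 2*n+1-k2 := by
      apply key _ _ hA.1 hA.2 (by omega) (by omega)
      rw [heq, abs_neg]
    rw [hk] at heq
    have := hne (2*n+1-k2) (by omega) (by omega)
    omega
  · exfalso
    rw [hB, seq_eval0, seq_eval2 hA.1] at heq
    have := hne (2*n+1-k1) (by omega) (by omega)
    omega
  · exfalso
    rw [seq_eval2 hA.1, seq_eval1 hB.1 hB.2] at heq
    have hk : 2*n+1-k1 = k2 := by
      apply key _ _ (by omega) (by omega) hB.1 hB.2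
      have : b (2*n+1-k1) = - b k2 := by omega
      rw [this, abs_neg]
    rw [hk] at heq
    have := hne k2 hB.1 hB.2
    omega
  · rw [seq_eval2 hA.1, seq_eval2 hB.1] at heq
    have : 2*n+1-k1 = 2*n+1-k2 := by
      apply key _ _ (by omega) (by omega) (by omega) (by omega)
      have : b (2*n+1-k1) = b (2*n+1-k2) := by omega
      rw [this]
    omega

lemma seq_reversal {i j : ℕ} (h1 : 1 ≤ i) (hij : i ≤ j) (hjn : j ≤ n) {k : ℕ} (hk : k ≤ 2*n) :
    seq n (reversal i j b) k = seq n b (mIdx n i j k) := by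
  have hsplit : k = 0 ∨ (1 ≤ k ∧ k ≤ n ∧ i ≤ k ∧ k ≤ j) ∨ (1 ≤ k ∧ k ≤ n ∧ ¬(i ≤ k ∧ k ≤ j))
      ∨ (n < k ∧ i ≤ 2*n+1-k ∧ 2*n+1-k ≤ j) ∨ (n < k ∧ ¬(i ≤ 2*n+1-k ∧ 2*n+1-k ≤ j)) := by
    omega
  rcases hsplit with h|h|h|h|h
  · subst h
    have hm : mIdx n i j 0 = 0 := by unfold mIdx; split_ifs <;> omega
    rw [hm, seq_eval0, seq_eval0]
  · have hm : mIdx n i j k = 2*n+1+k-(i+j) := by unfold mIdx; split_ifs <;> omega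
    rw [hm, seq_eval1 (by omega) (by omega), rev_in (by omega),
      seq_eval2 (show n < 2*n+1+k-(i+j) by omega),
      show 2*n+1-(2*n+1+k-(i+j)) = i+j-k by omega]
  · have hm : mIdx n i j k = k := by unfold mIdx; split_ifs <;> omega
    rw [hm, seq_eval1 (by omega) (by omega), rev_out h.2.2, seq_eval1 (by omega) (by omega)]
  · have hm : mIdx n i j k = i+j+k-(2*n+1) := by unfold mIdx; split_ifs <;> omega
    rw [hm, seq_eval2 (by omega), rev_in (by omega),
      seq_eval1 (show 1 ≤ i+j+k-(2*n+1) by omega) (show i+j+k-(2*n+1) ≤ n by omega),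
      show i+j-(2*n+1-k) = i+j+k-(2*n+1) by omega, neg_neg]
  · have hm : mIdx n i j k = k := by unfold mIdx; split_ifs <;> omega
    rw [hm, seq_eval2 (by omega), rev_out h.2, seq_eval2 (by omega)]

lemma isSignedPerm_reversal {i j : ℕ} (hb : IsSignedPerm n b)
    (h1 : 1 ≤ i) (hij : i ≤ j) (hjn : j ≤ n) : IsSignedPerm n (reversal i j b) := by
  unfold IsSignedPerm
  rw [← hb]
  apply Finset.Subset.antisymm
  · intro x hx
    simp only [Finset.mem_image, Finset.mem_Icc] at *
    obtain ⟨k, ⟨hk1, hk2⟩, rfl⟩ := hx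
    by_cases h : i ≤ k ∧ k ≤ j
    · refine ⟨i+j-k, ⟨by omega, by omega⟩, ?_⟩
      unfold reversal
      rw [if_pos h, abs_neg]
    · exact ⟨k, ⟨hk1, hk2⟩, by unfold reversal; rw [if_neg h]⟩
  · intro x hx
    simp only [Finset.mem_image, Finset.mem_Icc] at *
    obtain ⟨k, ⟨hk1, hk2⟩, rfl⟩ := hx
    by_cases h : i ≤ k ∧ k ≤ j
    · refine ⟨i+j-k, ⟨by omega, by omega⟩, ?_⟩
      unfold reversal
      rw [if_pos (show i ≤ i+j-k ∧ i+j-k ≤ j by omega), abs_neg,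
        show i+j-(i+j-k) = k by omega]
    · exact ⟨k, ⟨hk1, hk2⟩, by unfold reversal; rw [if_neg h]⟩

end SeqLemmas

section EB
variable (n : ℕ) (b : ℕ → ℤ) (hb : IsSignedPerm n b)

/-- The element of `Ipm n` with coordinate `seq n b k`. -/
def ebN (k : ℕ) (hk : k ≤ 2*n) : Ipm n := ⟨seq n b k, seq_mem hb hk⟩

def ebFin : Fin (2*n+1) → Ipm n := fun k => ebN n b hb k.val (by have := k.isLt; omega)

lemma card_Ipm : Fintype.card (Ipm n) = 2*n+1 := by
  rw [Fintype.card_coe, Int.card_Icc]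
  omega

lemma ebFin_bij : Function.Bijective (ebFin n b hb) := by
  rw [Fintype.bijective_iff_injective_and_card]
  constructor
  · intro k1 k2 h
    have : seq n b k1.val = seq n b k2.val := congrArg Subtype.val h
    exact Fin.ext (seq_inj hb (by omega) (by omega) this)
  · rw [card_Ipm, Fintype.card_fin]

/-- The Equiv version. -/
noncomputable def ebE : Fin (2*n+1) ≃ Ipm n := Equiv.ofBijective _ (ebFin_bij n b hb)

/-- The cycle `s̃(b) = (0, b₁, …, bₙ, -bₙ, …, -b₁)` as a permutation of `Ipm n`. -/
noncomputable def sigmaP : Equiv.Perm (Ipm n) :=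
  (ebE n b hb).permCongr (finRotate (2*n+1))

lemma ebE_apply (k : Fin (2*n+1)) : ebE n b hb k = ebN n b hb k.val (by omega) := rfl

lemma exists_rep (x : Ipm n) : ∃ k : ℕ, ∃ hk : k ≤ 2*n, x = ebN n b hb k hk := by
  obtain ⟨k, hk⟩ := (ebE n b hb).surjective x
  exact ⟨k.val, by omega, by rw [← hk]; rfl⟩

lemma sigmaP_apply (hn : 1 ≤ n) (k : ℕ) (hk : k ≤ 2*n) :
    sigmaP n b hb (ebN n b hb k hk) = ebN n b hb (succN n k) (succN_le n k hk) := by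
  have h1 : ebN n b hb k hk = ebE n b hb ⟨k, by omega⟩ := rfl
  rw [h1]
  unfold sigmaP
  rw [Equiv.permCongr_apply, Equiv.symm_apply_apply, finRotate_succ_apply]
  apply Subtype.ext
  show seq n b ((⟨k, by omega⟩ + 1 : Fin (2*n+1)) : Fin (2*n+1)).val = seq n b (succN n k)
  congr 1
  rw [Fin.val_add, Fin.val_one', Nat.mod_eq_of_lt (show 1 < 2*n+1 by omega)]
  exact mod_eq_succN n k hk

lemma ebN_inj {k1 k2 : ℕ} (hk1 : k1 ≤ 2*n) (hk2 : k2 ≤ 2*n)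
    (h : ebN n b hb k1 hk1 = ebN n b hb k2 hk2) : k1 = k2 :=
  seq_inj hb hk1 hk2 (congrArg Subtype.val h)

lemma swap_ebN (p q t : ℕ) (hp : p ≤ 2*n) (hq : q ≤ 2*n) (ht : t ≤ 2*n) :
    Equiv.swap (ebN n b hb p hp) (ebN n b hb q hq) (ebN n b hb t ht)
      = ebN n b hb (swIdx p q t) (by unfold swIdx; split_ifs <;> omega) := by
  unfold swIdx
  split_ifs with h1 h2
  · subst h1
    rw [Equiv.swap_apply_left]
  · subst h2
    rw [Equiv.swap_apply_right]
  · rw [Equiv.swap_apply_of_ne_of_ne]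
    · exact fun hE => h1 (ebN_inj n b hb ht hp hE)
    · exact fun hE => h2 (ebN_inj n b hb ht hq hE)
end EB

section SR
variable {n : ℕ} {b : ℕ → ℤ}

lemma sigma_reversal (hn : 1 ≤ n) (hb : IsSignedPerm n b) {i j : ℕ}
    (h1 : 1 ≤ i) (hij : i ≤ j) (hjn : j ≤ n) (hb' : IsSignedPerm n (reversal i j b)) :
    ∃ u v w z : Ipm n, sigmaP n (reversal i j b) hb'
      = sigmaP n b hb * Equiv.swap u v * Equiv.swap w z := by
  refine ⟨ebN n b hb (i-1) (by omega), ebN n b hb (2*n-j) (by omega),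
    ebN n b hb j (by omega), ebN n b hb (2*n+1-i) (by omega), ?_⟩
  apply Equiv.ext
  intro x
  obtain ⟨t, ht, rfl⟩ := exists_rep n b hb x
  -- rewrite LHS input in terms of b'
  have hx : ebN n b hb t ht = ebN n (reversal i j b) hb' (mIdx n i j t) (mIdx_le n i j t h1 hij hjn ht) := by
    apply Subtype.ext
    show seq n b t = seq n (reversal i j b) (mIdx n i j t)
    rw [seq_reversal h1 hij hjn (mIdx_le n i j t h1 hij hjn ht),
      mIdx_invol n i j t h1 hij hjn ht]
  conv_lhs => rw [hx]
  rw [sigmaP_apply n (reversal i j b) hb' hn _ (mIdx_le n i j t h1 hij hjn ht)]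
  rw [Equiv.Perm.mul_apply, Equiv.Perm.mul_apply]
  rw [swap_ebN n b hb j (2*n+1-i) t (by omega) (by omega) ht]
  rw [swap_ebN n b hb (i-1) (2*n-j) _ (by omega) (by omega)
    (by unfold swIdx; split_ifs <;> omega)]
  rw [sigmaP_apply n b hb hn _ (by unfold swIdx; split_ifs <;> omega)]
  apply Subtype.ext
  show seq n (reversal i j b) (succN n (mIdx n i j t))
      = seq n b (succN n (swIdx (i-1) (2*n-j) (swIdx j (2*n+1-i) t)))
  rw [seq_reversal h1 hij hjn (succN_le n _ (mIdx_le n i j t h1 hij hjn ht)),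
    s8_index n i j t h1 hij hjn ht]
end SR

section Endgame
variable {n : ℕ} {b : ℕ → ℤ}

lemma seq_id (hn : 1 ≤ n) (hid : ∀ k, 1 ≤ k → k ≤ n → b k = (k : ℤ)) {m : ℕ} (hm : m ≤ 2*n) :
    seq n b m = if m ≤ n then (m : ℤ) else (m : ℤ) - (2*n+1) := by
  have hsplit : m = 0 ∨ (1 ≤ m ∧ m ≤ n) ∨ (n < m) := by omega
  rcases hsplit with h|h|h
  · subst h
    rw [seq_eval0, if_pos (Nat.zero_le n)]
    simp
  · rw [seq_eval1 h.1 h.2, hid m h.1 h.2, if_pos h.2]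
  · rw [seq_eval2 h, hid (2*n+1-m) (by omega) (by omega), if_neg (by omega)]
    have : ((2*n+1-m : ℕ) : ℤ) = 2*(n:ℤ)+1-(m:ℤ) := by omega
    rw [this]
    push_cast
    ring

lemma pSigma_id (hn : 1 ≤ n) (hb : IsSignedPerm n b) (p : Equiv.Perm (Ipm n))
    (hp : ∀ j : Ipm n, (p j : ℤ) = if (j : ℤ) = -(n : ℤ) then (n : ℤ) else (j : ℤ) - 1)
    (hid : ∀ k, 1 ≤ k → k ≤ n → b k = (k : ℤ)) :
    p * sigmaP n b hb = 1 := by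
  apply Equiv.ext
  intro x
  obtain ⟨t, ht, rfl⟩ := exists_rep n b hb x
  rw [Equiv.Perm.mul_apply, Equiv.Perm.one_apply,
    sigmaP_apply n b hb hn t ht]
  apply Subtype.ext
  rw [hp]
  show (if (seq n b (succN n t) : ℤ) = -(n:ℤ) then (n:ℤ) else seq n b (succN n t) - 1)
    = seq n b t
  rw [seq_id hn hid (succN_le n t ht), seq_id hn hid ht]
  unfold succN
  split_ifs <;> omega

lemma core_induction (hn : 1 ≤ n) (p : Equiv.Perm (Ipm n))
    (hp : ∀ j : Ipm n, (p j : ℤ) = if (j : ℤ) = -(n : ℤ) then (n : ℤ) else (j : ℤ) - 1) :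
    ∀ l : List (ℕ × ℕ), ∀ b : ℕ → ℤ, ∀ hb : IsSignedPerm n b,
      (∀ q ∈ l, 1 ≤ q.1 ∧ q.1 ≤ q.2 ∧ q.2 ≤ n) →
      (∀ k, 1 ≤ k → k ≤ n → (l.foldl (fun f q => reversal q.1 q.2 f) b) k = (k : ℤ)) →
      2*n+1 ≤ 2*l.length + cycleCount (p * sigmaP n b hb) := by
  intro l
  induction l with
  | nil =>
    intro b hb _ hid
    simp only [List.foldl_nil] at hid
    have hcc : cycleCount (p * sigmaP n b hb) = cycleCount (1 : Equiv.Perm (Ipm n)) :=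
      congrArg _ (pSigma_id hn hb p hp hid)
    rw [hcc, cycleCount_one, card_Ipm]
    simp
  | cons q l ih =>
    intro b hb hval hid
    have hq := hval q List.mem_cons_self
    have hb' : IsSignedPerm n (reversal q.1 q.2 b) :=
      isSignedPerm_reversal hb hq.1 hq.2.1 hq.2.2
    have hid' : ∀ k, 1 ≤ k → k ≤ n →
        (l.foldl (fun f q => reversal q.1 q.2 f) (reversal q.1 q.2 b)) k = (k : ℤ) := by
      intro k a c
      have := hid k a c
      rwa [List.foldl_cons] at this
    have hIH := ih (reversal q.1 q.2 b) hb'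
      (fun r hr => hval r (List.mem_cons_of_mem _ hr)) hid'
    obtain ⟨u, v, w, z, hkey⟩ := sigma_reversal hn hb hq.1 hq.2.1 hq.2.2 hb'
    have hcc : cycleCount (p * sigmaP n (reversal q.1 q.2 b) hb')
        = cycleCount (p * sigmaP n b hb * Equiv.swap u v * Equiv.swap w z) :=
      congrArg _ (by rw [hkey, ← mul_assoc, ← mul_assoc])
    rw [hcc] at hIH
    have c1 := cycleCount_mul_swap_le (p * sigmaP n b hb * Equiv.swap u v) w z
    have c2 := cycleCount_mul_swap_le (p * sigmaP n b hb) u v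
    simp only [List.length_cons]
    omega
end Endgame



/-- Let `p` be the `(2n+1)`-cycle `(0, -1, …, -n, n, n-1, …, 1)` and
`s̃(a)` the `(2n+1)`-cycle `(0, a₁, …, aₙ, -aₙ, …, -a₁)` on `[n]±`, for a signed
permutation `a`.  Then the reversal distance of `a` satisfies
`d_r(a) ≥ (2n + 1 - C(p ∘ s̃(a))) / 2`, i.e. every `d` such that `a` is sortable in
`d` reversals satisfies `2n + 1 ≤ 2d + C(p ∘ s̃(a))`. -/
theorem stmt_8 (n : ℕ) (hn : 1 ≤ n) (a : ℕ → ℤ) (hsigned : IsSignedPerm n a)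
    (p : Equiv.Perm (Ipm n))
    (hp : ∀ j : Ipm n, (p j : ℤ) = if (j : ℤ) = -(n : ℤ) then (n : ℤ) else (j : ℤ) - 1)
    (st : Equiv.Perm (Ipm n))
    (hst : ∀ k ≤ 2 * n, ∀ x : Ipm n, (x : ℤ) = seq n a k →
      ((st x : ℤ) = seq n a ((k + 1) % (2 * n + 1)))) :
    ∀ d : ℕ, SortsIn n a d → 2 * n + 1 ≤ 2 * d + cycleCount (p * st) := by
  intro d hd
  obtain ⟨l, hlen, hval, hsort⟩ := hd
  have hst_eq : st = sigmaP n a hsigned := by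
    apply Equiv.ext
    intro x
    obtain ⟨t, ht, rfl⟩ := exists_rep n a hsigned x
    apply Subtype.ext
    rw [sigmaP_apply n a hsigned hn t ht]
    have hcoord : ((ebN n a hsigned t ht : Ipm n) : ℤ) = seq n a t := rfl
    rw [hst t ht _ hcoord]
    show seq n a ((t+1) % (2*n+1)) = seq n a (succN n t)
    rw [mod_eq_succN n t ht]
  have hcc : cycleCount (p * st) = cycleCount (p * sigmaP n a hsigned) :=
    congrArg _ (by rw [hst_eq])
  rw [hcc, ← hlen]
  exact core_induction hn p hp l a hsigned hval hsort
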